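/- The ideal ∅×Fin = {X ⊆ ℕ×ℕ : for every m, the set {n : (m,n) ∈ X} is finite}, ordered by ⊆, is Tukey-reducible to NWD. -/

import Mathlib

/-- The collection of compact nowhere dense subsets of Cantor space `2^ω`. -/
def NWD : Set (Set (ℕ → Bool)) := {K | IsCompact K ∧ IsNowhereDense K}

/-- A subset of a preorder is unbounded if it has no upper bound. -/
def Unbounded {P : Type*} [Preorder P] (S : Set P) : Prop := ¬ ∃ b : P, ∀ x ∈ S, x ≤ b

/-- A Tukey map sends unbounded sets to unbounded sets. -/
def IsTukeyMap {P Q : Type*} [Preorder P] [Preorder Q] (f : P → Q) : Prop :=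
  ∀ S : Set P, Unbounded S → Unbounded (f '' S)

/-- `P` is Tukey-reducible to `Q`. -/
def TukeyLE (P Q : Type*) [Preorder P] [Preorder Q] : Prop :=
  ∃ f : P → Q, IsTukeyMap f

/-- The ideal `∅ × Fin` on `ℕ × ℕ`. -/
def emptyTimesFin : Set (Set (ℕ × ℕ)) := {X | ∀ m : ℕ, {n : ℕ | (m, n) ∈ X}.Finite}



/-- The compact nowhere dense set attached to `g : ℕ → ℕ`. -/
def Kset (g : ℕ → ℕ) : Set (ℕ → Bool) :=
  {x | ∀ m, (∀ j < m, x j = false) → x m = true → ∀ n, g m ≤ n → x (m + 1 + n) = false}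

lemma agree_nhds (x : ℕ → Bool) (k : ℕ) : {y : ℕ → Bool | ∀ j < k, y j = x j} ∈ nhds x := by
  have : {y : ℕ → Bool | ∀ j < k, y j = x j} = ⋂ j ∈ Finset.range k, {y : ℕ → Bool | y j = x j} := by
    ext y; simp
  rw [this]
  refine IsOpen.mem_nhds (isOpen_biInter_finset fun j _ => ?_) (by simp)
  show IsOpen ((fun y : ℕ → Bool => y j) ⁻¹' {x j})
  exact (isOpen_discrete ({x j} : Set Bool)).preimage (continuous_apply j)

lemma isClosed_Kset (g : ℕ → ℕ) : IsClosed (Kset g) := by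
  rw [← isOpen_compl_iff, isOpen_iff_mem_nhds]
  intro x hx
  simp only [Kset, Set.mem_compl_iff, Set.mem_setOf_eq, not_forall] at hx
  obtain ⟨m, h1, h2, n, hn, h3⟩ := hx
  rw [Bool.not_eq_false] at h3
  filter_upwards [agree_nhds x (m + 2 + n)] with y hy
  simp only [Kset, Set.mem_compl_iff, Set.mem_setOf_eq, not_forall]
  refine ⟨m, fun j hj => ?_, ?_, n, hn, ?_⟩
  · rw [hy j (by omega)]; exact h1 j hj
  · rw [hy m (by omega)]; exact h2
  · rw [hy (m + 1 + n) (by omega), h3]; simp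

lemma tendsto_of_agree (x : ℕ → Bool) (y : ℕ → ℕ → Bool)
    (h : ∀ N, ∀ j < N, y N j = x j) :
    Filter.Tendsto y Filter.atTop (nhds x) := by
  rw [tendsto_pi_nhds]
  intro j
  refine tendsto_const_nhds.congr' ?_
  filter_upwards [Filter.eventually_ge_atTop (j + 1)] with N hN
  exact (h N j (by omega)).symm

lemma exists_bad (g : ℕ → ℕ) (x : ℕ → Bool) (N : ℕ) :
    ∃ y : ℕ → Bool, (∀ j < N, y j = x j) ∧ y ∉ Kset g := by
  by_cases h : ∃ m, m < N ∧ x m = true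
  · obtain ⟨m, hmN, hmt, hmin⟩ : ∃ m, m < N ∧ x m = true ∧ ∀ j < m, x j = false := by
      obtain ⟨m0, hm0N, hm0⟩ := h
      have hex : ∃ m, x m = true := ⟨m0, hm0⟩
      refine ⟨Nat.find hex, lt_of_le_of_lt (Nat.find_le hm0) hm0N, Nat.find_spec hex,
        fun j hj => ?_⟩
      simpa using Nat.find_min hex hj
    refine ⟨fun j => if j = m + 1 + (g m + N) then true else x j, ?_, ?_⟩
    · intro j hj
      show (if j = m + 1 + (g m + N) then true else x j) = x j
      rw [if_neg (by omega)]
    · intro hK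
      have h1 : ∀ j < m, (if j = m + 1 + (g m + N) then true else x j) = false := by
        intro j hj
        rw [if_neg (by omega)]
        exact hmin j hj
      have h2 : (if m = m + 1 + (g m + N) then true else x m) = true := by
        rw [if_neg (by omega)]
        exact hmt
      have h3 := hK m h1 h2 (g m + N) (by omega)
      simp only [if_pos rfl] at h3
      exact absurd h3 (by simp)
  · push_neg at h
    refine ⟨fun j => if j = N ∨ j = N + 1 + g N then true else x j, ?_, ?_⟩
    · intro j hj
      show (if j = N ∨ j = N + 1 + g N then true else x j) = x j
      rw [if_neg (by omega)]
    · intro hK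
      have h1 : ∀ j < N, (if j = N ∨ j = N + 1 + g N then true else x j) = false := by
        intro j hj
        rw [if_neg (by omega)]
        simpa using h j hj
      have h2 : (if N = N ∨ N = N + 1 + g N then true else x N) = true :=
        if_pos (Or.inl rfl)
      have h3 := hK N h1 h2 (g N) (by omega)
      have h4 : (if N + 1 + g N = N ∨ N + 1 + g N = N + 1 + g N then true
          else x (N + 1 + g N)) = false := h3
      rw [if_pos (Or.inr rfl)] at h4
      exact absurd h4 (by simp)

lemma isNowhereDense_Kset (g : ℕ → ℕ) : IsNowhereDense (Kset g) := by
  rw [(isClosed_Kset g).isNowhereDense_iff, interior_eq_empty_iff_dense_compl]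
  intro x
  choose y hy1 hy2 using exists_bad g x
  exact mem_closure_of_tendsto (tendsto_of_agree x y hy1)
    (Filter.Eventually.of_forall hy2)

lemma isCompact_Kset (g : ℕ → ℕ) : IsCompact (Kset g) :=
  (isClosed_Kset g).isCompact

/-- Bounding function for an element of the ideal. -/
noncomputable def gfun (X : Set (ℕ × ℕ)) (m : ℕ) : ℕ := sSup {n | (m, n) ∈ X} + 1

lemma lt_gfun {X : Set (ℕ × ℕ)} (hX : X ∈ emptyTimesFin) {m n : ℕ} (h : (m, n) ∈ X) :
    n < gfun X m :=
  Nat.lt_succ_of_le (le_csSup ((hX m).bddAbove) h)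

lemma isOpen_coord (i : ℕ) (b : Bool) : IsOpen {x : ℕ → Bool | x i = b} := by
  show IsOpen ((fun y : ℕ → Bool => y i) ⁻¹' {b})
  exact (isOpen_discrete ({b} : Set Bool)).preimage (continuous_apply i)

theorem emptyTimesFin_Tukey_le_NWD :
    TukeyLE {X // X ∈ emptyTimesFin} {K // K ∈ NWD} := by
  refine ⟨fun X => ⟨Kset (gfun X.1), isCompact_Kset _, isNowhereDense_Kset _⟩, ?_⟩
  intro S hS hbdd
  obtain ⟨B, hB⟩ := hbdd
  apply hS
  have hBsub : ∀ X ∈ S, Kset (gfun X.1) ⊆ B.1 := fun X hX => hB _ ⟨X, hX, rfl⟩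
  have hBcl : IsClosed B.1 := B.2.1.isClosed
  have hU : {p : ℕ × ℕ | ∃ X ∈ S, p ∈ X.1} ∈ emptyTimesFin := by
    intro m
    by_contra hfin
    have hinf : {n | (m, n) ∈ {p : ℕ × ℕ | ∃ X ∈ S, p ∈ X.1}}.Infinite := hfin
    have hC : {x : ℕ → Bool | (∀ j < m, x j = false) ∧ x m = true} ⊆ B.1 := by
      intro x hx
      have key : ∀ N : ℕ, ∃ y : ℕ → Bool, (∀ j < N, y j = x j) ∧ y ∈ B.1 := by
        intro N
        obtain ⟨n, hnmem, hNn⟩ := hinf.exists_gt N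
        obtain ⟨X, hXS, hmn⟩ := hnmem
        have hg : N < gfun X.1 m := lt_trans hNn (lt_gfun X.2 hmn)
        refine ⟨fun j => if j < N then x j else false, fun j hj => if_pos hj,
          hBsub X hXS ?_⟩
        intro m' h1 h2 n' hn'
        show (if m' + 1 + n' < N then x (m' + 1 + n') else false) = false
        by_cases hlt : m' + 1 + n' < N
        · exfalso
          have h2' : (if m' < N then x m' else false) = true := h2
          rw [if_pos (by omega)] at h2'
          have hmm : m' = m := by
            rcases lt_trichotomy m' m with hc | hc | hc
            · rw [hx.1 m' hc] at h2'; simp at h2'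
            · exact hc
            · have h1' : (if m < N then x m else false) = false := h1 m hc
              rw [if_pos (by omega), hx.2] at h1'
              simp at h1'
          subst hmm
          omega
        · rw [if_neg hlt]
      choose y hy1 hy2 using key
      have hcl : x ∈ closure B.1 :=
        mem_closure_of_tendsto (tendsto_of_agree x y hy1) (Filter.Eventually.of_forall hy2)
      rwa [hBcl.closure_eq] at hcl
    have hopen : IsOpen {x : ℕ → Bool | (∀ j < m, x j = false) ∧ x m = true} := by
      have heq : {x : ℕ → Bool | (∀ j < m, x j = false) ∧ x m = true} =
          (⋂ j ∈ Finset.range m, {x : ℕ → Bool | x j = false}) ∩ {x : ℕ → Bool | x m = true} := by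
        ext x; simp
      rw [heq]
      exact (isOpen_biInter_finset fun j _ => isOpen_coord j false).inter (isOpen_coord m true)
    have hsub : {x : ℕ → Bool | (∀ j < m, x j = false) ∧ x m = true} ⊆ interior B.1 :=
      interior_maximal hC hopen
    have hint : interior B.1 = ∅ := by
      have := B.2.2
      rwa [hBcl.isNowhereDense_iff] at this
    have hpt : (fun j => decide (j = m)) ∈
        {x : ℕ → Bool | (∀ j < m, x j = false) ∧ x m = true} := by
      constructor
      · intro j hj
        exact decide_eq_false (by omega)
      · simp
    have := hsub hpt
    rw [hint] at this
    exact this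
  exact ⟨⟨_, hU⟩, fun X hX => fun p hp => ⟨X, hX, hp⟩⟩
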